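/- Let θ, φ : [0,1] → ℝ be continuously differentiable, with θ not identically zero and with the zero set of φ consisting of at most isolated points of [0,1]. If the function C_{θ,φ}(u,v) = u·v + θ(max(u,v))·φ(u)·φ(v) is a copula on [0,1]², then: (a) φ(0) = 0; (b) φ(1)·θ(1) = 0; (c) φ'(u)·(θ·φ)'(v) ≥ −1 for all 0 < u ≤ v < 1; and (d) θ'(u) ≤ 0 for all u ∈ (0,1). -/

import Mathlib

open Filter Topology Set

lemma tendsto_right_quot {f : ℝ → ℝ} {a u : ℝ} (hf : HasDerivAt f a u) :
    Tendsto (fun h => (f (u + h) - f u) / h) (𝓝[>] (0:ℝ)) (𝓝 a) := by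
  have hs := hasDerivAt_iff_tendsto_slope.mp hf
  have hmap : Tendsto (fun h : ℝ => u + h) (𝓝[>] 0) (𝓝[≠] u) := by
    apply tendsto_nhdsWithin_of_tendsto_nhds_of_eventually_within
    · have : Tendsto (fun h : ℝ => u + h) (𝓝 0) (𝓝 (u + 0)) :=
        tendsto_const_nhds.add tendsto_id
      simpa using this.mono_left nhdsWithin_le_nhds
    · filter_upwards [self_mem_nhdsWithin] with h hh
      simp only [mem_compl_iff, mem_singleton_iff]
      have : (0:ℝ) < h := hh
      intro he; linarith [he ▸ (by linarith : u < u + h)]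
  have := hs.comp hmap
  apply this.congr
  intro h
  simp only [Function.comp_apply, slope_def_field]
  congr 1
  ring

lemma tendsto_left_quot {f : ℝ → ℝ} {a u : ℝ} (hf : HasDerivAt f a u) :
    Tendsto (fun h => (f u - f (u - h)) / h) (𝓝[>] (0:ℝ)) (𝓝 a) := by
  have hs := hasDerivAt_iff_tendsto_slope.mp hf
  have hmap : Tendsto (fun h : ℝ => u - h) (𝓝[>] 0) (𝓝[≠] u) := by
    apply tendsto_nhdsWithin_of_tendsto_nhds_of_eventually_within
    · have : Tendsto (fun h : ℝ => u - h) (𝓝 0) (𝓝 (u - 0)) :=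
        tendsto_const_nhds.sub tendsto_id
      simpa using this.mono_left nhdsWithin_le_nhds
    · filter_upwards [self_mem_nhdsWithin] with h hh
      simp only [mem_compl_iff, mem_singleton_iff]
      have : (0:ℝ) < h := hh
      intro he; linarith [he ▸ (by linarith : u - h < u)]
  have := hs.comp hmap
  apply this.congr
  intro h
  simp only [Function.comp_apply, slope_def_field]
  rw [show u - h - u = -h by ring, div_neg, neg_div', neg_sub]

/-- A bivariate copula on `[0,1]²`, given as a function `ℝ → ℝ → ℝ`. -/
def IsCopula (C : ℝ → ℝ → ℝ) : Prop :=
  (∀ u ∈ Set.Icc (0:ℝ) 1, C u 0 = 0 ∧ C 0 u = 0) ∧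
  (∀ u ∈ Set.Icc (0:ℝ) 1, C u 1 = u ∧ C 1 u = u) ∧
  (∀ u₁ u₂ v₁ v₂ : ℝ, 0 ≤ u₁ → u₁ ≤ u₂ → u₂ ≤ 1 → 0 ≤ v₁ → v₁ ≤ v₂ → v₂ ≤ 1 →
    C u₂ v₂ - C u₂ v₁ - C u₁ v₂ + C u₁ v₁ ≥ 0)

theorem stmt0 (θ φ : ℝ → ℝ)
    (hθ : ContDiffOn ℝ 1 θ (Set.Icc 0 1))
    (hφ : ContDiffOn ℝ 1 φ (Set.Icc 0 1))
    (hθne : ∃ u ∈ Set.Icc (0:ℝ) 1, θ u ≠ 0)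
    (hφiso : ∀ u ∈ Set.Icc (0:ℝ) 1, φ u = 0 →
      ∃ ε > 0, ∀ x ∈ Set.Icc (0:ℝ) 1, x ≠ u → |x - u| < ε → φ x ≠ 0)
    (hC : IsCopula (fun u v => u * v + θ (max u v) * φ u * φ v)) :
    φ 0 = 0 ∧
    φ 1 * θ 1 = 0 ∧
    (∀ u v : ℝ, 0 < u → u ≤ v → v < 1 →
      derivWithin φ (Set.Icc 0 1) u *
        derivWithin (fun x => θ x * φ x) (Set.Icc 0 1) v ≥ -1) ∧
    (∀ u ∈ Set.Ioo (0:ℝ) 1, derivWithin θ (Set.Icc 0 1) u ≤ 0) := by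
  obtain ⟨hB0, hB1, h2inc⟩ := hC
  -- differentiability facts
  have hφdiff : DifferentiableOn ℝ φ (Set.Icc 0 1) := hφ.differentiableOn one_ne_zero
  have hθdiff : DifferentiableOn ℝ θ (Set.Icc 0 1) := hθ.differentiableOn one_ne_zero
  have hgC : ContDiffOn ℝ 1 (fun x => θ x * φ x) (Set.Icc 0 1) := hθ.mul hφ
  have hgdiff : DifferentiableOn ℝ (fun x => θ x * φ x) (Set.Icc 0 1) :=
    hgC.differentiableOn one_ne_zero
  have hDA : ∀ (f : ℝ → ℝ), DifferentiableOn ℝ f (Set.Icc 0 1) →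
      ∀ u ∈ Set.Ioo (0:ℝ) 1, HasDerivAt f (derivWithin f (Set.Icc 0 1) u) u := by
    intro f hf u hu
    exact ((hf u (Set.mem_Icc_of_Ioo hu)).hasDerivWithinAt).hasDerivAt
      (Icc_mem_nhds hu.1 hu.2)
  -- Part (a)
  have ha : φ 0 = 0 := by
    by_contra h0
    have hzero : ∀ v ∈ Set.Icc (0:ℝ) 1, θ v * φ v = 0 := by
      intro v hv
      have := (hB0 v hv).2
      simp only at this
      rw [max_eq_right hv.1] at this
      have : θ v * φ 0 * φ v = 0 := by linarith
      rcases mul_eq_zero.mp this with h | h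
      · rcases mul_eq_zero.mp h with h | h
        · simp [h]
        · exact absurd h h0
      · simp [h]
    obtain ⟨u₀, hu₀, hθu₀⟩ := hθne
    have hφu₀ : φ u₀ = 0 := by
      have := hzero u₀ hu₀
      rcases mul_eq_zero.mp this with h | h
      · exact absurd h hθu₀
      · exact h
    obtain ⟨ε, hε, hiso⟩ := hφiso u₀ hu₀ hφu₀
    -- continuity of θ near u₀ within Icc
    have hθcont : ContinuousWithinAt θ (Set.Icc 0 1) u₀ := hθ.continuousOn u₀ hu₀
    have hev : ∀ᶠ x in 𝓝[Set.Icc (0:ℝ) 1] u₀, θ x ≠ 0 :=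
      hθcont.eventually_ne hθu₀
    obtain ⟨δ, hδ, hδp⟩ := Metric.mem_nhdsWithin_iff.mp hev
    -- pick a point x ≠ u₀ close to u₀ in Icc
    set r := min (min δ ε) (1/2) with hr
    have hrpos : 0 < r := by positivity
    have hrle : r ≤ 1/2 := min_le_right _ _
    have hx : ∃ x ∈ Set.Icc (0:ℝ) 1, x ≠ u₀ ∧ |x - u₀| < δ ∧ |x - u₀| < ε := by
      rcases lt_or_ge u₀ (1/2 : ℝ) with hcase | hcase
      · refine ⟨u₀ + r/2, ⟨by linarith [hu₀.1], by linarith⟩, by intro h; nlinarith, ?_, ?_⟩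
        · rw [abs_of_pos (by linarith : (0:ℝ) < u₀ + r/2 - u₀)]
          have : r ≤ δ := le_trans (min_le_left _ _) (min_le_left _ _)
          linarith
        · rw [abs_of_pos (by linarith : (0:ℝ) < u₀ + r/2 - u₀)]
          have : r ≤ ε := le_trans (min_le_left _ _) (min_le_right _ _)
          linarith
      · refine ⟨u₀ - r/2, ⟨by linarith, by linarith [hu₀.2]⟩, by intro h; nlinarith, ?_, ?_⟩
        · rw [abs_of_neg (by linarith : u₀ - r/2 - u₀ < 0)]
          have : r ≤ δ := le_trans (min_le_left _ _) (min_le_left _ _)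
          linarith
        · rw [abs_of_neg (by linarith : u₀ - r/2 - u₀ < 0)]
          have : r ≤ ε := le_trans (min_le_left _ _) (min_le_right _ _)
          linarith
    obtain ⟨x, hxI, hxne, hxδ, hxε⟩ := hx
    have hθx : θ x ≠ 0 := hδp ⟨Metric.mem_ball.mpr (by rwa [Real.dist_eq]), hxI⟩
    have hφx : φ x ≠ 0 := hiso x hxI hxne hxε
    have := hzero x hxI
    exact (mul_ne_zero hθx hφx) this
  -- Part (b)
  have hb : φ 1 * θ 1 = 0 := by
    by_contra hb0
    obtain ⟨ε, hε, hiso⟩ := hφiso 0 ⟨le_refl 0, zero_le_one⟩ ha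
    set x := min ε 1 / 2 with hxdef
    have hx0 : 0 < x := by positivity
    have hx1 : x ≤ 1/2 := by
      have : min ε 1 ≤ 1 := min_le_right _ _
      simp only [hxdef]; linarith
    have hxI : x ∈ Set.Icc (0:ℝ) 1 := ⟨le_of_lt hx0, by linarith⟩
    have hxε : |x - 0| < ε := by
      rw [sub_zero, abs_of_pos hx0]
      have : min ε 1 ≤ ε := min_le_left _ _
      have : 0 < min ε 1 := lt_min hε zero_lt_one
      simp only [hxdef]; linarith [min_le_left ε 1]
    have hφx : φ x ≠ 0 := hiso x hxI (ne_of_gt hx0) hxε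
    have hx1eq := (hB1 x hxI).1
    simp only at hx1eq
    rw [max_eq_right (by linarith : x ≤ 1)] at hx1eq
    have h0 : φ x * (φ 1 * θ 1) = 0 := by nlinarith [hx1eq]
    rcases mul_eq_zero.mp h0 with h | h
    · exact hφx h
    · exact hb0 h
  -- Part (c)
  have hc : ∀ u v : ℝ, 0 < u → u ≤ v → v < 1 →
      derivWithin φ (Set.Icc 0 1) u *
        derivWithin (fun x => θ x * φ x) (Set.Icc 0 1) v ≥ -1 := by
    intro u v hu huv hv
    have hu1 : u < 1 := lt_of_le_of_lt huv hv
    have hv0 : 0 < v := lt_of_lt_of_le hu huv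
    have hda : HasDerivAt φ (derivWithin φ (Set.Icc 0 1) u) u :=
      hDA φ hφdiff u ⟨hu, hu1⟩
    have hdb : HasDerivAt (fun x => θ x * φ x)
        (derivWithin (fun x => θ x * φ x) (Set.Icc 0 1) v) v :=
      hDA _ hgdiff v ⟨hv0, hv⟩
    have hF := tendsto_left_quot hda
    have hG := tendsto_right_quot hdb
    have hFG := hF.mul hG
    apply ge_of_tendsto hFG
    have hm : (0:ℝ) < min u (1 - v) := lt_min hu (by linarith)
    filter_upwards [Ioo_mem_nhdsGT_of_mem
      (show (0:ℝ) ∈ Set.Ico 0 (min u (1-v)) from ⟨le_refl 0, hm⟩)] with h hh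
    obtain ⟨hh0, hhm⟩ := hh
    have hh1 : h < u := lt_of_lt_of_le hhm (min_le_left _ _)
    have hh2 : h < 1 - v := lt_of_lt_of_le hhm (min_le_right _ _)
    have hD := h2inc (u-h) u v (v+h) (by linarith) (by linarith) (by linarith)
      (by linarith) (by linarith) (by linarith)
    simp only at hD
    rw [max_eq_right (show u ≤ v+h by linarith), max_eq_right huv,
      max_eq_right (show u - h ≤ v + h by linarith),
      max_eq_right (show u - h ≤ v by linarith)] at hD
    have key : (φ u - φ (u-h)) * (θ (v+h) * φ (v+h) - θ v * φ v) ≥ -(h*h) := by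
      nlinarith [hD]
    show (-1:ℝ) ≤ (φ u - φ (u-h))/h * ((θ (v+h) * φ (v+h) - θ v * φ v)/h)
    rw [div_mul_div_comm, le_div_iff₀ (by positivity : (0:ℝ) < h * h)]
    nlinarith [key]
  -- Part (d), key inequality
  have hdkey : ∀ u ∈ Set.Ioo (0:ℝ) 1,
      derivWithin θ (Set.Icc 0 1) u * φ u ^ 2 ≤ 0 := by
    intro u hu
    set c := derivWithin θ (Set.Icc 0 1) u with hcdef
    have hdc : HasDerivAt θ c u := hDA θ hθdiff u hu
    have hda : HasDerivAt φ (derivWithin φ (Set.Icc 0 1) u) u := hDA φ hφdiff u hu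
    set a := derivWithin φ (Set.Icc 0 1) u with hadef
    have hA : Tendsto (fun h => (θ (u+h) - θ (u-h))/h) (𝓝[>] (0:ℝ)) (𝓝 (c + c)) :=
      ((tendsto_right_quot hdc).add (tendsto_left_quot hdc)).congr
        (fun h => by ring)
    have hE : Tendsto (fun h => (φ (u+h) - φ (u-h))/h) (𝓝[>] (0:ℝ)) (𝓝 (a + a)) :=
      ((tendsto_right_quot hda).add (tendsto_left_quot hda)).congr
        (fun h => by ring)
    have hsub : Tendsto (fun h:ℝ => u - h) (𝓝[>] (0:ℝ)) (𝓝 u) := by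
      have : Tendsto (fun h:ℝ => u - h) (𝓝 0) (𝓝 (u - 0)) :=
        tendsto_const_nhds.sub tendsto_id
      simpa using this.mono_left nhdsWithin_le_nhds
    have hadd : Tendsto (fun h:ℝ => u + h) (𝓝[>] (0:ℝ)) (𝓝 u) := by
      have : Tendsto (fun h:ℝ => u + h) (𝓝 0) (𝓝 (u + 0)) :=
        tendsto_const_nhds.add tendsto_id
      simpa using this.mono_left nhdsWithin_le_nhds
    have hφc : ContinuousAt φ u :=
      (hφ.continuousOn u (Set.mem_Icc_of_Ioo hu)).continuousAt
        (Icc_mem_nhds hu.1 hu.2)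
    have hθc : ContinuousAt θ u :=
      (hθ.continuousOn u (Set.mem_Icc_of_Ioo hu)).continuousAt
        (Icc_mem_nhds hu.1 hu.2)
    have hB : Tendsto (fun h => φ (u-h)^2) (𝓝[>] (0:ℝ)) (𝓝 (φ u ^ 2)) :=
      (hφc.tendsto.comp hsub).pow 2
    have hCθ : Tendsto (fun h => θ (u+h)) (𝓝[>] (0:ℝ)) (𝓝 (θ u)) :=
      hθc.tendsto.comp hadd
    have hid : Tendsto (fun h:ℝ => h) (𝓝[>] (0:ℝ)) (𝓝 0) :=
      tendsto_id.mono_right nhdsWithin_le_nhds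
    have hQ : Tendsto (fun h => (θ (u+h) - θ (u-h))/h * φ (u-h)^2
        - θ (u+h) * h * ((φ (u+h) - φ (u-h))/h)^2 - 4*h) (𝓝[>] (0:ℝ))
        (𝓝 ((c+c) * φ u ^ 2 - θ u * 0 * (a+a)^2 - 4*0)) :=
      ((hA.mul hB).sub ((hCθ.mul hid).mul (hE.pow 2))).sub (hid.const_mul 4)
    have hle : (c+c) * φ u ^ 2 - θ u * 0 * (a+a)^2 - 4*0 ≤ 0 := by
      apply le_of_tendsto hQ
      have hm : (0:ℝ) < min u (1 - u) := lt_min hu.1 (by linarith [hu.2])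
      filter_upwards [Ioo_mem_nhdsGT_of_mem
        (show (0:ℝ) ∈ Set.Ico 0 (min u (1-u)) from ⟨le_refl 0, hm⟩)] with h hh
      obtain ⟨hh0, hhm⟩ := hh
      have hh1 : h < u := lt_of_lt_of_le hhm (min_le_left _ _)
      have hh2 : h < 1 - u := lt_of_lt_of_le hhm (min_le_right _ _)
      have hD := h2inc (u-h) (u+h) (u-h) (u+h) (by linarith) (by linarith)
        (by linarith) (by linarith) (by linarith) (by linarith)
      simp only at hD
      rw [max_self (u+h), max_eq_left (show u - h ≤ u + h by linarith),
        max_eq_right (show u - h ≤ u + h by linarith), max_self (u-h)] at hD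
      have key : (θ (u+h) - θ (u-h)) * φ (u-h)^2
          ≤ 4*h^2 + θ (u+h) * (φ (u+h) - φ (u-h))^2 := by nlinarith [hD]
      have e : (θ (u+h) - θ (u-h))/h * φ (u-h)^2
          - θ (u+h) * h * ((φ (u+h) - φ (u-h))/h)^2 - 4*h
          = ((θ (u+h) - θ (u-h)) * φ (u-h)^2
            - θ (u+h) * (φ (u+h) - φ (u-h))^2 - 4*h^2)/h := by
        field_simp
      rw [e]
      apply div_nonpos_of_nonpos_of_nonneg
      · linarith [key]
      · linarith
    nlinarith [hle]
  -- Part (d)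
  have hd : ∀ u ∈ Set.Ioo (0:ℝ) 1, derivWithin θ (Set.Icc 0 1) u ≤ 0 := by
    intro u hu
    by_contra hpos
    push_neg at hpos
    rcases eq_or_ne (φ u) 0 with h0 | h0
    · -- isolated zero case
      obtain ⟨ε, hε, hiso⟩ := hφiso u (Set.mem_Icc_of_Ioo hu) h0
      have hcont : ContinuousOn (derivWithin θ (Set.Icc 0 1)) (Set.Icc 0 1) :=
        hθ.continuousOn_derivWithin (uniqueDiffOn_Icc zero_lt_one) le_rfl
      have hev : ∀ᶠ x in 𝓝[Set.Icc (0:ℝ) 1] u, 0 < derivWithin θ (Set.Icc 0 1) x :=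
        (hcont u (Set.mem_Icc_of_Ioo hu)).eventually (eventually_gt_nhds hpos)
      obtain ⟨δ, hδ, hδp⟩ := Metric.mem_nhdsWithin_iff.mp hev
      set r := min (min δ ε) (1 - u) with hr
      have hrpos : 0 < r := lt_min (lt_min hδ hε) (by linarith [hu.2])
      set x := u + r/2 with hxdef
      have hrδ : r ≤ δ := le_trans (min_le_left _ _) (min_le_left _ _)
      have hrε : r ≤ ε := le_trans (min_le_left _ _) (min_le_right _ _)
      have hru : r ≤ 1 - u := min_le_right _ _
      have hxI : x ∈ Set.Icc (0:ℝ) 1 := ⟨by simp only [hxdef]; linarith [hu.1],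
        by simp only [hxdef]; linarith⟩
      have hxne : x ≠ u := by simp only [hxdef]; intro hcontra; nlinarith
      have hxabs : |x - u| = r/2 := by
        rw [hxdef, add_sub_cancel_left, abs_of_pos (by linarith)]
      have hφx : φ x ≠ 0 := hiso x hxI hxne (by rw [hxabs]; linarith)
      have hθx : 0 < derivWithin θ (Set.Icc 0 1) x :=
        hδp ⟨Metric.mem_ball.mpr (by rw [Real.dist_eq, hxabs]; linarith), hxI⟩
      have hxIoo : x ∈ Set.Ioo (0:ℝ) 1 :=
        ⟨by simp only [hxdef]; linarith [hu.1], by simp only [hxdef]; linarith⟩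
      have := hdkey x hxIoo
      nlinarith [pow_two_pos_of_ne_zero hφx]
    · have := hdkey u hu
      nlinarith [pow_two_pos_of_ne_zero h0]
  exact ⟨ha, hb, hc, hd⟩
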